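/- The homogenization maps intertwine the whole Poisson pencil: for all a,b ∈ ℂ, all k,l ≥ 0, and all f ∈ P^{(k)}, g ∈ P^{(l)}, the bracket {f,g}_{a,b} lies in P^{(k+l)} and 𝒫_{k+l}({f,g}_{a,b}) = {𝒫_k(f), 𝒫_l(g)}_{a,b}. -/

import Mathlib

open MvPolynomial

noncomputable section

/-- The polynomial ring `R = ℂ[z_1,…,z_n,ξ_1,…,ξ_n]`. -/
abbrev R (n : ℕ) := MvPolynomial (Fin n ⊕ Fin n) ℂ

/-- The variable `z_i`. -/
def z (n : ℕ) (i : Fin n) : R n := X (Sum.inl i)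

/-- The variable `ξ_i`. -/
def ξ (n : ℕ) (i : Fin n) : R n := X (Sum.inr i)

/-- `H = Σ_i z_i ξ_i`. -/
def H (n : ℕ) : R n := ∑ i, z n i * ξ n i

/-- The bidegree weight: `z`-variables have weight `(1,0)`, `ξ`-variables weight `(0,1)`. -/
def bw (n : ℕ) : Fin n ⊕ Fin n → ℕ × ℕ := Sum.elim (fun _ => (1, 0)) (fun _ => (0, 1))

/-- `P^k`: the span of the bidegree-`(k,k)` monomials. -/
def Phom (n k : ℕ) : Submodule ℂ (R n) := weightedHomogeneousSubmodule ℂ (bw n) (k, k)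

/-- `P^{(k)} = ⊕_{j<k+1} P^j`; so `PfiltLT n (k+1)` is `P^{(k)}` and `PfiltLT n k` is `P^{(k-1)}`. -/
def PfiltLT (n k : ℕ) : Submodule ℂ (R n) := ⨆ j ∈ Finset.range k, Phom n j

/-- The homogenization map `𝒫_k`, sending `Σ_{j≤k} f_j` (with `f_j ∈ P^j`) to `Σ_{j≤k} f_j H^{k-j}`. -/
def homog (n k : ℕ) (f : R n) : R n :=
  ∑ j ∈ Finset.range (k + 1), weightedHomogeneousComponent (bw n) (j, j) f * H n ^ (k - j)

/-- The canonical Poisson bracket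
`{f,g}_can = Σ_i (∂f/∂z_i·∂g/∂ξ_i − ∂f/∂ξ_i·∂g/∂z_i)`. -/
def brCan (n : ℕ) (f g : R n) : R n :=
  ∑ i, (pderiv (Sum.inl i) f * pderiv (Sum.inr i) g -
        pderiv (Sum.inr i) f * pderiv (Sum.inl i) g)

/-- The `r`-matrix bracket `{f,g}_π`. -/
def brPi (n : ℕ) (f g : R n) : R n :=
  (∑ i, ∑ j, if i < j then z n i * z n j *
      (pderiv (Sum.inl i) f * pderiv (Sum.inl j) g -
       pderiv (Sum.inl j) f * pderiv (Sum.inl i) g) else 0)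
  - (∑ i, ∑ j, if i < j then ξ n i * ξ n j *
      (pderiv (Sum.inr i) f * pderiv (Sum.inr j) g -
       pderiv (Sum.inr j) f * pderiv (Sum.inr i) g) else 0)
  + (∑ i, ∑ j, if i < j then z n i * ξ n i *
      (pderiv (Sum.inl j) f * pderiv (Sum.inr j) g -
       pderiv (Sum.inr j) f * pderiv (Sum.inl j) g) else 0)
  - (∑ i, ∑ j, if j < i then z n i * ξ n i *
      (pderiv (Sum.inl j) f * pderiv (Sum.inr j) g -
       pderiv (Sum.inr j) f * pderiv (Sum.inl j) g) else 0)

/-- The Poisson pencil `{f,g}_{a,b} = a·{f,g}_π + b·H·{f,g}_can`. -/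
def brPencil (n : ℕ) (a b : ℂ) (f g : R n) : R n :=
  a • brPi n f g + b • (H n * brCan n f g)

section Lemmas

variable {n : ℕ}

lemma weight_fst (d : (Fin n ⊕ Fin n) →₀ ℕ) :
    (Finsupp.weight (bw n) d).1 = ∑ i : Fin n, d (Sum.inl i) := by
  rw [Finsupp.weight_apply, Finsupp.sum_fintype]
  · rw [Prod.fst_sum, Fintype.sum_sum_type]
    simp [bw]
  · intro s; simp

lemma weight_snd (d : (Fin n ⊕ Fin n) →₀ ℕ) :
    (Finsupp.weight (bw n) d).2 = ∑ i : Fin n, d (Sum.inr i) := by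
  rw [Finsupp.weight_apply, Finsupp.sum_fintype]
  · rw [Prod.snd_sum, Fintype.sum_sum_type]
    simp [bw]
  · intro s; simp

lemma weight_single_one (s : Fin n ⊕ Fin n) :
    Finsupp.weight (bw n) (Finsupp.single s 1) = bw n s := by
  rw [Finsupp.weight_apply, Finsupp.sum_single_index] <;> simp

lemma X_eq_monomial' (t : Fin n ⊕ Fin n) :
    (X t : R n) = monomial (Finsupp.single t 1) (1 : ℂ) := rfl

lemma sub_single_add_single (s : Fin n ⊕ Fin n) (d : (Fin n ⊕ Fin n) →₀ ℕ) (h : d s ≠ 0) :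
    Finsupp.single s 1 + (d - Finsupp.single s 1) = d := by
  ext a
  rcases eq_or_ne a s with rfl | ha
  · simp only [Finsupp.add_apply, Finsupp.tsub_apply, Finsupp.single_eq_same]
    omega
  · simp [Finsupp.single_eq_of_ne' (Ne.symm ha)]

/-- Multiplying the `s`-derivative by any variable of the same weight preserves
weighted homogeneity. -/
lemma X_mul_pderiv_mem {s t : Fin n ⊕ Fin n} (hst : bw n s = bw n t) {m : ℕ × ℕ} {f : R n}
    (hf : IsWeightedHomogeneous (bw n) f m) :
    IsWeightedHomogeneous (bw n) ((X t : R n) * pderiv s f) m := by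
  have key : ∀ d ∈ f.support,
      IsWeightedHomogeneous (bw n) ((X t : R n) * pderiv s (monomial d (coeff d f))) m := by
    intro d hd
    have hw : Finsupp.weight (bw n) d = m := hf (mem_support_iff.mp hd)
    rw [pderiv_monomial]
    by_cases h : d s = 0
    · rw [h]
      simp only [Nat.cast_zero, mul_zero, map_zero, mul_zero]
      exact isWeightedHomogeneous_zero ℂ _ _
    · rw [X_eq_monomial', monomial_mul]
      apply isWeightedHomogeneous_monomial
      have hsplit : Finsupp.weight (bw n) (Finsupp.single s 1) +
          Finsupp.weight (bw n) (d - Finsupp.single s 1) = m := by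
        rw [← map_add, sub_single_add_single s d h, hw]
      rw [map_add, weight_single_one, ← hst]
      rw [weight_single_one] at hsplit
      exact hsplit
  conv_lhs => rw [f.as_sum]
  rw [map_sum, Finset.mul_sum]
  rw [show m = m from rfl]
  exact (weightedHomogeneousSubmodule ℂ (bw n) m).sum_mem
    (fun d hd => (key d hd : _ ∈ weightedHomogeneousSubmodule ℂ (bw n) m))

lemma X_mul_pderiv_monomial_self (s : Fin n ⊕ Fin n) (d : (Fin n ⊕ Fin n) →₀ ℕ) (c : ℂ) :
    (X s : R n) * pderiv s (monomial d c) = monomial d (c * (d s : ℂ)) := by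
  rw [pderiv_monomial]
  by_cases h : d s = 0
  · rw [h]; simp
  · rw [X_eq_monomial', monomial_mul, one_mul, sub_single_add_single s d h]

/-! ### Euler identities -/

lemma euler_inl {j : ℕ} {f : R n} (hf : IsWeightedHomogeneous (bw n) f (j, j)) :
    ∑ i : Fin n, z n i * pderiv (Sum.inl i) f = (j : ℂ) • f := by
  have step : ∀ i : Fin n, z n i * pderiv (Sum.inl i) f
      = ∑ d ∈ f.support, monomial d (coeff d f * (d (Sum.inl i) : ℂ)) := by
    intro i
    conv_lhs => rw [f.as_sum]
    rw [map_sum, Finset.mul_sum]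
    exact Finset.sum_congr rfl fun d _ => X_mul_pderiv_monomial_self _ d _
  calc ∑ i : Fin n, z n i * pderiv (Sum.inl i) f
      = ∑ i : Fin n, ∑ d ∈ f.support, monomial d (coeff d f * (d (Sum.inl i) : ℂ)) :=
        Finset.sum_congr rfl fun i _ => step i
    _ = ∑ d ∈ f.support, ∑ i : Fin n, monomial d (coeff d f * (d (Sum.inl i) : ℂ)) :=
        Finset.sum_comm
    _ = ∑ d ∈ f.support, (j : ℂ) • monomial d (coeff d f) := by
        refine Finset.sum_congr rfl fun d hd => ?_
        rw [← map_sum, ← Finset.mul_sum]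
        have hw : (Finsupp.weight (bw n) d).1 = j := by
          rw [hf (mem_support_iff.mp hd)]
        rw [weight_fst] at hw
        rw [← Nat.cast_sum, hw, smul_monomial, smul_eq_mul, mul_comm]
    _ = (j : ℂ) • f := by rw [← Finset.smul_sum, ← f.as_sum]

lemma euler_inr {j : ℕ} {f : R n} (hf : IsWeightedHomogeneous (bw n) f (j, j)) :
    ∑ i : Fin n, ξ n i * pderiv (Sum.inr i) f = (j : ℂ) • f := by
  have step : ∀ i : Fin n, ξ n i * pderiv (Sum.inr i) f
      = ∑ d ∈ f.support, monomial d (coeff d f * (d (Sum.inr i) : ℂ)) := by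
    intro i
    conv_lhs => rw [f.as_sum]
    rw [map_sum, Finset.mul_sum]
    exact Finset.sum_congr rfl fun d _ => X_mul_pderiv_monomial_self _ d _
  calc ∑ i : Fin n, ξ n i * pderiv (Sum.inr i) f
      = ∑ i : Fin n, ∑ d ∈ f.support, monomial d (coeff d f * (d (Sum.inr i) : ℂ)) :=
        Finset.sum_congr rfl fun i _ => step i
    _ = ∑ d ∈ f.support, ∑ i : Fin n, monomial d (coeff d f * (d (Sum.inr i) : ℂ)) :=
        Finset.sum_comm
    _ = ∑ d ∈ f.support, (j : ℂ) • monomial d (coeff d f) := by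
        refine Finset.sum_congr rfl fun d hd => ?_
        rw [← map_sum, ← Finset.mul_sum]
        have hw : (Finsupp.weight (bw n) d).2 = j := by
          rw [hf (mem_support_iff.mp hd)]
        rw [weight_snd] at hw
        rw [← Nat.cast_sum, hw, smul_monomial, smul_eq_mul, mul_comm]
    _ = (j : ℂ) • f := by rw [← Finset.smul_sum, ← f.as_sum]

/-! ### Derivatives of `H` -/

lemma pderiv_H_inl (i : Fin n) : pderiv (Sum.inl i) (H n) = ξ n i := by
  unfold H z ξ
  rw [map_sum, Finset.sum_eq_single i]
  · simp
  · intro m _ hmi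
    rw [pderiv_mul, pderiv_X_of_ne (by simp [hmi]), pderiv_X_of_ne (by simp)]
    ring
  · simp

lemma pderiv_H_inr (i : Fin n) : pderiv (Sum.inr i) (H n) = z n i := by
  unfold H z ξ
  rw [map_sum, Finset.sum_eq_single i]
  · simp
  · intro m _ hmi
    rw [pderiv_mul, pderiv_X_of_ne (by simp), pderiv_X_of_ne (by simp [hmi])]
    ring
  · simp

end Lemmas

section BrLemmas

variable {n : ℕ}

/-- Normal form for `brPi` as a single double sum. -/
lemma brPi_eq (f g : R n) : brPi n f g = ∑ i : Fin n, ∑ j : Fin n, if i < j then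
      (z n i * z n j * (pderiv (Sum.inl i) f * pderiv (Sum.inl j) g -
          pderiv (Sum.inl j) f * pderiv (Sum.inl i) g)
       - ξ n i * ξ n j * (pderiv (Sum.inr i) f * pderiv (Sum.inr j) g -
          pderiv (Sum.inr j) f * pderiv (Sum.inr i) g)
       + z n i * ξ n i * (pderiv (Sum.inl j) f * pderiv (Sum.inr j) g -
          pderiv (Sum.inr j) f * pderiv (Sum.inl j) g)
       - z n j * ξ n j * (pderiv (Sum.inl i) f * pderiv (Sum.inr i) g -
          pderiv (Sum.inr i) f * pderiv (Sum.inl i) g)) else 0 := by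
  unfold brPi
  rw [show (∑ i : Fin n, ∑ j : Fin n, if j < i then z n i * ξ n i *
      (pderiv (Sum.inl j) f * pderiv (Sum.inr j) g -
       pderiv (Sum.inr j) f * pderiv (Sum.inl j) g) else 0)
    = ∑ i : Fin n, ∑ j : Fin n, if i < j then z n j * ξ n j *
      (pderiv (Sum.inl i) f * pderiv (Sum.inr i) g -
       pderiv (Sum.inr i) f * pderiv (Sum.inl i) g) else 0 from Finset.sum_comm]
  rw [← Finset.sum_sub_distrib, ← Finset.sum_add_distrib, ← Finset.sum_sub_distrib]
  refine Finset.sum_congr rfl fun i _ => ?_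
  rw [← Finset.sum_sub_distrib, ← Finset.sum_add_distrib, ← Finset.sum_sub_distrib]
  refine Finset.sum_congr rfl fun j _ => ?_
  split <;> simp

lemma brPi_zero_left (g : R n) : brPi n 0 g = 0 := by
  rw [brPi_eq]
  refine Finset.sum_eq_zero fun i _ => Finset.sum_eq_zero fun j _ => ?_
  split <;> simp

lemma brPi_add_left (f₁ f₂ g : R n) :
    brPi n (f₁ + f₂) g = brPi n f₁ g + brPi n f₂ g := by
  simp only [brPi_eq, map_add]
  rw [← Finset.sum_add_distrib]
  refine Finset.sum_congr rfl fun i _ => ?_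
  rw [← Finset.sum_add_distrib]
  refine Finset.sum_congr rfl fun j _ => ?_
  split <;> [ring; simp]

lemma brPi_anti (f g : R n) : brPi n f g = - brPi n g f := by
  have h : brPi n f g + brPi n g f = 0 := by
    simp only [brPi_eq]
    rw [← Finset.sum_add_distrib]
    refine Finset.sum_eq_zero fun i _ => ?_
    rw [← Finset.sum_add_distrib]
    refine Finset.sum_eq_zero fun j _ => ?_
    split <;> [ring; simp]
  exact eq_neg_of_add_eq_zero_left h

lemma brPi_add_right (f g₁ g₂ : R n) :
    brPi n f (g₁ + g₂) = brPi n f g₁ + brPi n f g₂ := by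
  rw [brPi_anti f (g₁ + g₂), brPi_add_left, brPi_anti f g₁, brPi_anti f g₂]
  ring

lemma brPi_zero_right (f : R n) : brPi n f 0 = 0 := by
  rw [brPi_anti, brPi_zero_left, neg_zero]

lemma brPi_mul_left (x y g : R n) :
    brPi n (x * y) g = x * brPi n y g + y * brPi n x g := by
  simp only [brPi_eq, pderiv_mul, Finset.mul_sum]
  rw [← Finset.sum_add_distrib]
  refine Finset.sum_congr rfl fun i _ => ?_
  rw [← Finset.sum_add_distrib]
  refine Finset.sum_congr rfl fun j _ => ?_
  split <;> [ring; simp]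

lemma brPi_mul_right (x y f : R n) :
    brPi n f (x * y) = x * brPi n f y + y * brPi n f x := by
  rw [brPi_anti f (x * y), brPi_mul_left, brPi_anti f y, brPi_anti f x]
  ring

lemma brPi_H_left (g : R n) : brPi n (H n) g = 0 := by
  simp only [brPi_eq, pderiv_H_inl, pderiv_H_inr]
  refine Finset.sum_eq_zero fun i _ => Finset.sum_eq_zero fun j _ => ?_
  split <;> [ring; rfl]

lemma brPi_H_right (f : R n) : brPi n f (H n) = 0 := by
  rw [brPi_anti, brPi_H_left, neg_zero]

lemma brPi_one_left (g : R n) : brPi n 1 g = 0 := by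
  simp only [brPi_eq, pderiv_one]
  refine Finset.sum_eq_zero fun i _ => Finset.sum_eq_zero fun j _ => ?_
  split <;> [ring; rfl]

lemma brPi_Hpow_right (f : R n) (B : ℕ) : brPi n f (H n ^ B) = 0 := by
  induction B with
  | zero =>
    rw [pow_zero, brPi_anti, brPi_one_left, neg_zero]
  | succ B ih =>
    rw [pow_succ, brPi_mul_right, ih, brPi_H_right]
    ring

lemma brPi_Hpow_left (g : R n) (A : ℕ) : brPi n (H n ^ A) g = 0 := by
  rw [brPi_anti, brPi_Hpow_right, neg_zero]

lemma brPi_mul_pow (f g : R n) (A B : ℕ) :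
    brPi n (f * H n ^ A) (g * H n ^ B) = H n ^ (A + B) * brPi n f g := by
  rw [brPi_mul_left, brPi_Hpow_left, brPi_mul_right, brPi_Hpow_right, pow_add]
  ring

/-! ### brCan lemmas -/

lemma brCan_zero_left (g : R n) : brCan n 0 g = 0 := by
  unfold brCan
  refine Finset.sum_eq_zero fun i _ => ?_
  simp

lemma brCan_add_left (f₁ f₂ g : R n) :
    brCan n (f₁ + f₂) g = brCan n f₁ g + brCan n f₂ g := by
  unfold brCan
  rw [← Finset.sum_add_distrib]
  refine Finset.sum_congr rfl fun i _ => ?_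
  rw [map_add, map_add]
  ring

lemma brCan_anti (f g : R n) : brCan n f g = - brCan n g f := by
  have h : brCan n f g + brCan n g f = 0 := by
    unfold brCan
    rw [← Finset.sum_add_distrib]
    refine Finset.sum_eq_zero fun i _ => ?_
    ring
  exact eq_neg_of_add_eq_zero_left h

lemma brCan_add_right (f g₁ g₂ : R n) :
    brCan n f (g₁ + g₂) = brCan n f g₁ + brCan n f g₂ := by
  rw [brCan_anti f (g₁ + g₂), brCan_add_left, brCan_anti f g₁, brCan_anti f g₂]
  ring

lemma brCan_zero_right (f : R n) : brCan n f 0 = 0 := by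
  rw [brCan_anti, brCan_zero_left, neg_zero]

lemma brCan_mul_left (x y g : R n) :
    brCan n (x * y) g = x * brCan n y g + y * brCan n x g := by
  unfold brCan
  simp only [pderiv_mul, Finset.mul_sum]
  rw [← Finset.sum_add_distrib]
  refine Finset.sum_congr rfl fun i _ => ?_
  ring

lemma brCan_mul_right (x y f : R n) :
    brCan n f (x * y) = x * brCan n f y + y * brCan n f x := by
  rw [brCan_anti f (x * y), brCan_mul_left, brCan_anti f y, brCan_anti f x]
  ring

lemma brCan_one_left (g : R n) : brCan n 1 g = 0 := by
  unfold brCan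
  refine Finset.sum_eq_zero fun i _ => ?_
  simp

/-- Euler: `H` Poisson-commutes (canonically) with polynomials of equal bidegree. -/
lemma brCan_H_left {j : ℕ} {g : R n} (hg : IsWeightedHomogeneous (bw n) g (j, j)) :
    brCan n (H n) g = 0 := by
  unfold brCan
  simp only [pderiv_H_inl, pderiv_H_inr]
  rw [Finset.sum_sub_distrib, euler_inr hg, euler_inl hg, sub_self]

lemma brCan_H_right {j : ℕ} {f : R n} (hf : IsWeightedHomogeneous (bw n) f (j, j)) :
    brCan n f (H n) = 0 := by
  rw [brCan_anti, brCan_H_left hf, neg_zero]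

lemma brCan_Hpow_right {j : ℕ} {f : R n} (hf : IsWeightedHomogeneous (bw n) f (j, j)) (B : ℕ) :
    brCan n f (H n ^ B) = 0 := by
  induction B with
  | zero =>
    rw [pow_zero, brCan_anti, brCan_one_left, neg_zero]
  | succ B ih =>
    rw [pow_succ, brCan_mul_right, ih, brCan_H_right hf]
    ring

lemma brCan_Hpow_left {j : ℕ} {g : R n} (hg : IsWeightedHomogeneous (bw n) g (j, j)) (A : ℕ) :
    brCan n (H n ^ A) g = 0 := by
  rw [brCan_anti, brCan_Hpow_right hg, neg_zero]

end BrLemmas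

section HomLemmas

variable {n : ℕ}

lemma H_hom : IsWeightedHomogeneous (bw n) (H n) (1, 1) := by
  unfold H
  exact (weightedHomogeneousSubmodule ℂ (bw n) (1, 1)).sum_mem fun i _ =>
    (isWeightedHomogeneous_X ℂ (bw n) (Sum.inl i)).mul (isWeightedHomogeneous_X ℂ (bw n) (Sum.inr i))

lemma Hpow_hom (A : ℕ) : IsWeightedHomogeneous (bw n) (H n ^ A) (A, A) := by
  induction A with
  | zero => rw [pow_zero]; exact isWeightedHomogeneous_one ℂ _
  | succ A ih => rw [pow_succ]; exact ih.mul H_hom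

lemma pair_mem (s t s' t' : Fin n ⊕ Fin n) (h1 : bw n s = bw n t) (h2 : bw n s' = bw n t')
    {j m : ℕ} {f g : R n} (hf : IsWeightedHomogeneous (bw n) f (j, j))
    (hg : IsWeightedHomogeneous (bw n) g (m, m)) :
    ((X t : R n) * pderiv s f) * ((X t' : R n) * pderiv s' g) ∈ Phom n (j + m) :=
  (X_mul_pderiv_mem h1 hf).mul (X_mul_pderiv_mem h2 hg)

set_option maxHeartbeats 1000000 in
lemma brPi_hom {j m : ℕ} {f g : R n} (hf : IsWeightedHomogeneous (bw n) f (j, j))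
    (hg : IsWeightedHomogeneous (bw n) g (m, m)) :
    brPi n f g ∈ Phom n (j + m) := by
  unfold brPi
  refine sub_mem (add_mem (sub_mem ?_ ?_) ?_) ?_ <;>
    refine Submodule.sum_mem _ fun i _ => Submodule.sum_mem _ fun p _ => ?_ <;>
    split <;> try exact Submodule.zero_mem _
  · rw [show z n i * z n p * (pderiv (Sum.inl i) f * pderiv (Sum.inl p) g -
          pderiv (Sum.inl p) f * pderiv (Sum.inl i) g)
        = ((X (Sum.inl i) : R n) * pderiv (Sum.inl i) f) *
            ((X (Sum.inl p) : R n) * pderiv (Sum.inl p) g)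
          - ((X (Sum.inl i) : R n) * pderiv (Sum.inl p) f) *
            ((X (Sum.inl p) : R n) * pderiv (Sum.inl i) g)
      from by simp only [z, ξ]; ring]
    exact sub_mem
      (pair_mem (Sum.inl i) (Sum.inl i) (Sum.inl p) (Sum.inl p) rfl rfl hf hg)
      (pair_mem (Sum.inl p) (Sum.inl i) (Sum.inl i) (Sum.inl p) rfl rfl hf hg)
  · rw [show ξ n i * ξ n p * (pderiv (Sum.inr i) f * pderiv (Sum.inr p) g -
          pderiv (Sum.inr p) f * pderiv (Sum.inr i) g)
        = ((X (Sum.inr i) : R n) * pderiv (Sum.inr i) f) *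
            ((X (Sum.inr p) : R n) * pderiv (Sum.inr p) g)
          - ((X (Sum.inr i) : R n) * pderiv (Sum.inr p) f) *
            ((X (Sum.inr p) : R n) * pderiv (Sum.inr i) g)
      from by simp only [z, ξ]; ring]
    exact sub_mem
      (pair_mem (Sum.inr i) (Sum.inr i) (Sum.inr p) (Sum.inr p) rfl rfl hf hg)
      (pair_mem (Sum.inr p) (Sum.inr i) (Sum.inr i) (Sum.inr p) rfl rfl hf hg)
  · rw [show z n i * ξ n i * (pderiv (Sum.inl p) f * pderiv (Sum.inr p) g -
          pderiv (Sum.inr p) f * pderiv (Sum.inl p) g)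
        = ((X (Sum.inl i) : R n) * pderiv (Sum.inl p) f) *
            ((X (Sum.inr i) : R n) * pderiv (Sum.inr p) g)
          - ((X (Sum.inr i) : R n) * pderiv (Sum.inr p) f) *
            ((X (Sum.inl i) : R n) * pderiv (Sum.inl p) g)
      from by simp only [z, ξ]; ring]
    exact sub_mem
      (pair_mem (Sum.inl p) (Sum.inl i) (Sum.inr p) (Sum.inr i) rfl rfl hf hg)
      (pair_mem (Sum.inr p) (Sum.inr i) (Sum.inl p) (Sum.inl i) rfl rfl hf hg)
  · rw [show z n i * ξ n i * (pderiv (Sum.inl p) f * pderiv (Sum.inr p) g -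
          pderiv (Sum.inr p) f * pderiv (Sum.inl p) g)
        = ((X (Sum.inl i) : R n) * pderiv (Sum.inl p) f) *
            ((X (Sum.inr i) : R n) * pderiv (Sum.inr p) g)
          - ((X (Sum.inr i) : R n) * pderiv (Sum.inr p) f) *
            ((X (Sum.inl i) : R n) * pderiv (Sum.inl p) g)
      from by simp only [z, ξ]; ring]
    exact sub_mem
      (pair_mem (Sum.inl p) (Sum.inl i) (Sum.inr p) (Sum.inr i) rfl rfl hf hg)
      (pair_mem (Sum.inr p) (Sum.inr i) (Sum.inl p) (Sum.inl i) rfl rfl hf hg)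

set_option maxHeartbeats 1000000 in
lemma HbrCan_hom {j m : ℕ} {f g : R n} (hf : IsWeightedHomogeneous (bw n) f (j, j))
    (hg : IsWeightedHomogeneous (bw n) g (m, m)) :
    H n * brCan n f g ∈ Phom n (j + m) := by
  unfold H brCan
  rw [Finset.sum_mul_sum]
  refine Submodule.sum_mem _ fun p _ => Submodule.sum_mem _ fun i _ => ?_
  rw [show z n p * ξ n p * (pderiv (Sum.inl i) f * pderiv (Sum.inr i) g -
        pderiv (Sum.inr i) f * pderiv (Sum.inl i) g)
      = ((X (Sum.inl p) : R n) * pderiv (Sum.inl i) f) *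
          ((X (Sum.inr p) : R n) * pderiv (Sum.inr i) g)
        - ((X (Sum.inr p) : R n) * pderiv (Sum.inr i) f) *
          ((X (Sum.inl p) : R n) * pderiv (Sum.inl i) g)
    from by simp only [z, ξ]; ring]
  exact sub_mem
    (pair_mem (Sum.inl i) (Sum.inl p) (Sum.inr i) (Sum.inr p) rfl rfl hf hg)
    (pair_mem (Sum.inr i) (Sum.inr p) (Sum.inl i) (Sum.inl p) rfl rfl hf hg)

lemma brPencil_hom (a b : ℂ) {j m : ℕ} {f g : R n} (hf : IsWeightedHomogeneous (bw n) f (j, j))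
    (hg : IsWeightedHomogeneous (bw n) g (m, m)) :
    brPencil n a b f g ∈ Phom n (j + m) :=
  add_mem (Submodule.smul_mem _ a (brPi_hom hf hg)) (Submodule.smul_mem _ b (HbrCan_hom hf hg))

end HomLemmas

section PencilLemmas

variable {n : ℕ}

lemma brPencil_add_left (a b : ℂ) (f₁ f₂ g : R n) :
    brPencil n a b (f₁ + f₂) g = brPencil n a b f₁ g + brPencil n a b f₂ g := by
  unfold brPencil
  rw [brPi_add_left, brCan_add_left, mul_add, smul_add, smul_add]
  abel

lemma brPencil_zero_left (a b : ℂ) (g : R n) : brPencil n a b 0 g = 0 := by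
  unfold brPencil
  rw [brPi_zero_left, brCan_zero_left, mul_zero, smul_zero, smul_zero, add_zero]

lemma brPencil_add_right (a b : ℂ) (f g₁ g₂ : R n) :
    brPencil n a b f (g₁ + g₂) = brPencil n a b f g₁ + brPencil n a b f g₂ := by
  unfold brPencil
  rw [brPi_add_right, brCan_add_right, mul_add, smul_add, smul_add]
  abel

lemma brPencil_zero_right (a b : ℂ) (f : R n) : brPencil n a b f 0 = 0 := by
  unfold brPencil
  rw [brPi_zero_right, brCan_zero_right, mul_zero, smul_zero, smul_zero, add_zero]

lemma brPencil_sum_left {ι : Type*} (a b : ℂ) (s : Finset ι) (x : ι → R n) (g : R n) :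
    brPencil n a b (∑ i ∈ s, x i) g = ∑ i ∈ s, brPencil n a b (x i) g := by
  classical
  induction s using Finset.induction with
  | empty => simpa using brPencil_zero_left a b g
  | insert _ _ hx ih =>
    rw [Finset.sum_insert hx, Finset.sum_insert hx, brPencil_add_left, ih]

lemma brPencil_sum_right {ι : Type*} (a b : ℂ) (s : Finset ι) (f : R n) (y : ι → R n) :
    brPencil n a b f (∑ i ∈ s, y i) = ∑ i ∈ s, brPencil n a b f (y i) := by
  classical
  induction s using Finset.induction with
  | empty => simpa using brPencil_zero_right a b f
  | insert _ _ hx ih =>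
    rw [Finset.sum_insert hx, Finset.sum_insert hx, brPencil_add_right, ih]

lemma brPencil_sum_sum {ι κ : Type*} (a b : ℂ) (s : Finset ι) (t : Finset κ)
    (x : ι → R n) (y : κ → R n) :
    brPencil n a b (∑ i ∈ s, x i) (∑ j ∈ t, y j)
      = ∑ i ∈ s, ∑ j ∈ t, brPencil n a b (x i) (y j) := by
  rw [brPencil_sum_left]
  exact Finset.sum_congr rfl fun i _ => brPencil_sum_right a b t (x i) y

lemma brCan_mul_pow {j m : ℕ} {f g : R n} (hf : IsWeightedHomogeneous (bw n) f (j, j))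
    (hg : IsWeightedHomogeneous (bw n) g (m, m)) (A B : ℕ) :
    brCan n (f * H n ^ A) (g * H n ^ B) = H n ^ (A + B) * brCan n f g := by
  have hfA : IsWeightedHomogeneous (bw n) (f * H n ^ A) (j + A, j + A) := hf.mul (Hpow_hom A)
  rw [brCan_mul_right, brCan_Hpow_right hfA B, brCan_mul_left, brCan_Hpow_left hg A, pow_add]
  ring

lemma brPencil_mul_pow (a b : ℂ) {j m : ℕ} {f g : R n}
    (hf : IsWeightedHomogeneous (bw n) f (j, j))
    (hg : IsWeightedHomogeneous (bw n) g (m, m)) (A B : ℕ) :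
    brPencil n a b (f * H n ^ A) (g * H n ^ B) = H n ^ (A + B) * brPencil n a b f g := by
  unfold brPencil
  rw [brPi_mul_pow, brCan_mul_pow hf hg, mul_add, mul_smul_comm, mul_smul_comm, mul_left_comm]

end PencilLemmas

section FiltLemmas

variable {n : ℕ}

lemma homog_sum {K : ℕ} {ι : Type*} (s : Finset ι) (x : ι → R n) :
    homog n K (∑ i ∈ s, x i) = ∑ i ∈ s, homog n K (x i) := by
  unfold homog
  simp only [map_sum, Finset.sum_mul]
  exact Finset.sum_comm

lemma homog_of_hom {K q : ℕ} (hq : q ≤ K) {x : R n} (hx : IsWeightedHomogeneous (bw n) x (q, q)) :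
    homog n K x = x * H n ^ (K - q) := by
  unfold homog
  rw [Finset.sum_eq_single q]
  · rw [hx.weightedHomogeneousComponent_same]
  · intro p _ hpq
    rw [hx.weightedHomogeneousComponent_ne (p, p) (by simp [Prod.mk.injEq, hpq]), zero_mul]
  · intro h
    exact absurd (Finset.mem_range.mpr (by omega)) h

lemma Phom_le_PfiltLT {q K : ℕ} (h : q < K) : Phom n q ≤ PfiltLT n K := by
  unfold PfiltLT
  exact le_iSup₂ (f := fun j (_ : j ∈ Finset.range K) => Phom n j) q (Finset.mem_range.mpr h)

lemma filt_decomp {K : ℕ} {f : R n} (h : f ∈ PfiltLT n K) :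
    f = ∑ j ∈ Finset.range K, weightedHomogeneousComponent (bw n) (j, j) f := by
  classical
  set T : R n →ₗ[ℂ] R n :=
    (∑ j ∈ Finset.range K, weightedHomogeneousComponent (bw n) (j, j)) - LinearMap.id with hT
  have hle : PfiltLT n K ≤ LinearMap.ker T := by
    unfold PfiltLT
    refine iSup₂_le fun q hq => fun x hx => ?_
    have hx' : IsWeightedHomogeneous (bw n) x (q, q) := hx
    simp only [hT, LinearMap.mem_ker, LinearMap.sub_apply, LinearMap.id_apply,
      LinearMap.sum_apply]
    rw [Finset.sum_eq_single q]
    · rw [hx'.weightedHomogeneousComponent_same, sub_self]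
    · intro p _ hpq
      exact hx'.weightedHomogeneousComponent_ne (p, p) (by simp [Prod.mk.injEq, hpq])
    · intro hq'
      exact absurd hq hq'
  have h0 := hle h
  simp only [hT, LinearMap.mem_ker, LinearMap.sub_apply, LinearMap.id_apply,
    LinearMap.sum_apply] at h0
  exact (sub_eq_zero.mp h0).symm

end FiltLemmas

/-- The homogenization maps intertwine the whole Poisson pencil: for all
`a, b ∈ ℂ`, all `k, l ≥ 0`, and all `f ∈ P^{(k)}`, `g ∈ P^{(l)}`, the bracket `{f,g}_{a,b}`
lies in `P^{(k+l)}` and `𝒫_{k+l}({f,g}_{a,b}) = {𝒫_k(f), 𝒫_l(g)}_{a,b}`. -/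
theorem stmt_4 (n : ℕ) (hn : 1 ≤ n) (a b : ℂ) (k l : ℕ)
    (f g : R n) (hf : f ∈ PfiltLT n (k + 1)) (hg : g ∈ PfiltLT n (l + 1)) :
    brPencil n a b f g ∈ PfiltLT n (k + l + 1) ∧
    homog n (k + l) (brPencil n a b f g) = brPencil n a b (homog n k f) (homog n l g) := by
  classical
  have hFj : ∀ j : ℕ,
      IsWeightedHomogeneous (bw n) (weightedHomogeneousComponent (bw n) (j, j) f) (j, j) :=
    fun j => weightedHomogeneousComponent_isWeightedHomogeneous (j, j) f
  have hGm : ∀ m : ℕ,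
      IsWeightedHomogeneous (bw n) (weightedHomogeneousComponent (bw n) (m, m) g) (m, m) :=
    fun m => weightedHomogeneousComponent_isWeightedHomogeneous (m, m) g
  have hf' : f = ∑ j ∈ Finset.range (k + 1), weightedHomogeneousComponent (bw n) (j, j) f :=
    filt_decomp hf
  have hg' : g = ∑ m ∈ Finset.range (l + 1), weightedHomogeneousComponent (bw n) (m, m) g :=
    filt_decomp hg
  have hexp : brPencil n a b f g
      = ∑ j ∈ Finset.range (k + 1), ∑ m ∈ Finset.range (l + 1),
          brPencil n a b (weightedHomogeneousComponent (bw n) (j, j) f)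
            (weightedHomogeneousComponent (bw n) (m, m) g) := by
    conv_lhs => rw [hf', hg']
    exact brPencil_sum_sum a b _ _ _ _
  constructor
  · rw [hexp]
    refine Submodule.sum_mem _ fun j hj => Submodule.sum_mem _ fun m hm => ?_
    have hj' := Finset.mem_range.mp hj
    have hm' := Finset.mem_range.mp hm
    exact Phom_le_PfiltLT (by omega) (brPencil_hom a b (hFj j) (hGm m))
  · have lhs_eq : homog n (k + l) (brPencil n a b f g)
        = ∑ j ∈ Finset.range (k + 1), ∑ m ∈ Finset.range (l + 1),
            brPencil n a b (weightedHomogeneousComponent (bw n) (j, j) f)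
              (weightedHomogeneousComponent (bw n) (m, m) g) * H n ^ (k + l - (j + m)) := by
      rw [hexp, homog_sum]
      refine Finset.sum_congr rfl fun j hj => ?_
      rw [homog_sum]
      refine Finset.sum_congr rfl fun m hm => ?_
      have hj' := Finset.mem_range.mp hj
      have hm' := Finset.mem_range.mp hm
      exact homog_of_hom (by omega) (brPencil_hom a b (hFj j) (hGm m))
    rw [lhs_eq]
    rw [show homog n k f = ∑ j ∈ Finset.range (k + 1),
          weightedHomogeneousComponent (bw n) (j, j) f * H n ^ (k - j) from rfl,
        show homog n l g = ∑ m ∈ Finset.range (l + 1),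
          weightedHomogeneousComponent (bw n) (m, m) g * H n ^ (l - m) from rfl]
    rw [brPencil_sum_sum]
    refine Finset.sum_congr rfl fun j hj => Finset.sum_congr rfl fun m hm => ?_
    have hj' := Finset.mem_range.mp hj
    have hm' := Finset.mem_range.mp hm
    rw [brPencil_mul_pow a b (hFj j) (hGm m)]
    rw [show (k - j) + (l - m) = k + l - (j + m) from by omega]
    exact mul_comm _ _
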